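/- Any two Cartan involutions on End_R(M) for a finite-dimensional real vector space M are conjugate by an invertible element: if σ₁ and σ₂ are adjoint involutions of two inner products on M, then there exists an invertible a ∈ End_R(M) such that σ₂(x) = a·σ₁(a⁻¹xa)·a⁻¹ for all x. -/

import Mathlib

open Module

lemma exists_orthonormal_basis_of_posdef (M : Type*) [AddCommGroup M] [Module ℝ M]
    [FiniteDimensional ℝ M] (B : LinearMap.BilinForm ℝ M)
    (hsymm : ∀ u v : M, B u v = B v u) (hpos : ∀ u : M, u ≠ 0 → 0 < B u u) :
    ∃ b : Basis (Fin (finrank ℝ M)) ℝ M, ∀ i j, B (b i) (b j) = if i = j then 1 else 0 := by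
  obtain ⟨v, hv⟩ := LinearMap.BilinForm.exists_orthogonal_basis
    (B := B) (LinearMap.isSymm_def.mpr fun u w => hsymm u w)
  have hvpos : ∀ i, 0 < B (v i) (v i) := fun i => hpos _ (v.ne_zero i)
  have hsqrt : ∀ i, Real.sqrt (B (v i) (v i)) ≠ 0 := fun i =>
    ne_of_gt (Real.sqrt_pos.mpr (hvpos i))
  refine ⟨v.unitsSMul (fun i => Units.mk0 (Real.sqrt (B (v i) (v i)))⁻¹
    (inv_ne_zero (hsqrt i))), fun i j => ?_⟩
  rw [Basis.unitsSMul_apply, Basis.unitsSMul_apply]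
  simp only [Units.smul_mk0, map_smul, LinearMap.smul_apply, smul_eq_mul]
  by_cases h : i = j
  · subst h
    have ht := Real.mul_self_sqrt (le_of_lt (hvpos i))
    rw [if_pos rfl, ← ht]
    field_simp
    rw [Real.sqrt_sq (Real.sqrt_nonneg _)]
    exact div_self (pow_ne_zero 2 (hsqrt i))
  · rw [hv h, if_neg h]
    ring

/-- any two Cartan involutions on `End_ℝ(M)` (adjoint involutions of two
inner products on `M`) are conjugate by an invertible element. -/
theorem stmt_2 (M : Type*) [AddCommGroup M] [Module ℝ M] [FiniteDimensional ℝ M]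
    (B₁ B₂ : LinearMap.BilinForm ℝ M)
    (h₁symm : ∀ u v : M, B₁ u v = B₁ v u) (h₁pos : ∀ u : M, u ≠ 0 → 0 < B₁ u u)
    (h₂symm : ∀ u v : M, B₂ u v = B₂ v u) (h₂pos : ∀ u : M, u ≠ 0 → 0 < B₂ u u)
    (σ₁ σ₂ : Module.End ℝ M → Module.End ℝ M)
    (hadj₁ : ∀ (x : Module.End ℝ M) (u v : M), B₁ (x u) v = B₁ u (σ₁ x v))
    (hadj₂ : ∀ (x : Module.End ℝ M) (u v : M), B₂ (x u) v = B₂ u (σ₂ x v)) :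
    ∃ a : (Module.End ℝ M)ˣ, ∀ x : Module.End ℝ M,
      σ₂ x = (a : Module.End ℝ M) * σ₁ ((↑a⁻¹ : Module.End ℝ M) * x * (a : Module.End ℝ M)) *
        (↑a⁻¹ : Module.End ℝ M) := by
  obtain ⟨b₁, hb₁⟩ := exists_orthonormal_basis_of_posdef M B₁ h₁symm h₁pos
  obtain ⟨b₂, hb₂⟩ := exists_orthonormal_basis_of_posdef M B₂ h₂symm h₂pos
  set g : M ≃ₗ[ℝ] M := b₂.equiv b₁ (Equiv.refl _) with hg
  have key : ∀ u v : M, B₁ (g u) (g v) = B₂ u v := by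
    have heq : B₁.comp g.toLinearMap g.toLinearMap = B₂ :=
      LinearMap.BilinForm.ext_basis b₂ fun i j => by
        simp only [LinearMap.BilinForm.comp_apply, LinearEquiv.coe_coe, hg,
          Basis.equiv_apply, Equiv.refl_apply, hb₁ i j, hb₂ i j]
    intro u v
    rw [← heq, LinearMap.BilinForm.comp_apply]
    rfl
  have nondeg : ∀ w : M, (∀ u, B₂ u w = 0) → w = 0 := by
    intro w hw
    by_contra h
    exact (ne_of_gt (h₂pos w h)) (h₂symm w w ▸ hw w)
  refine ⟨⟨g.symm.toLinearMap, g.toLinearMap, by ext m; simp, by ext m; simp⟩, fun x => ?_⟩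
  apply LinearMap.ext
  intro w
  set R : Module.End ℝ M :=
    g.symm.toLinearMap * σ₁ (g.toLinearMap * x * g.symm.toLinearMap) * g.toLinearMap with hR
  show σ₂ x w = R w
  have hd : ∀ u, B₂ u (σ₂ x w - R w) = 0 := by
    intro u
    have h1 : B₂ u (σ₂ x w) = B₂ (x u) w := (hadj₂ x u w).symm
    have h2 : B₂ u (R w) = B₂ (x u) w := by
      have : R w = g.symm (σ₁ (g.toLinearMap * x * g.symm.toLinearMap) (g w)) := rfl
      have hxu : (↑g * x * ↑g.symm : Module.End ℝ M) (g u) = g (x u) := by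
        show g (x (g.symm (g u))) = g (x u)
        rw [LinearEquiv.symm_apply_apply]
      rw [this, ← key, LinearEquiv.apply_symm_apply, ← hadj₁, hxu, key]
    rw [map_sub, h1, h2, sub_self]
  have := nondeg _ hd
  rw [sub_eq_zero] at this
  exact this
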